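/- Let n ≥ 2 and N ≥ 4n + 4. Let K_N be the complete graph on N vertices, let M be a matching in K_N (a set of pairwise non-adjacent edges), and let H = K_N − M be the graph obtained from K_N by deleting the edges of M. Then for any k ≤ n edges e_1, …, e_k of H and any two distinct vertices v, w of H, there is a trail (a walk with no repeated edges) in H from v to w whose edge set contains e_1, …, e_k. -/

import Mathlib

open Finset SimpleGraph

private lemma stmt9_sym2_exists {α : Type*} (e : Sym2 α) : ∃ a b, e = s(a, b) := by
  induction e using Sym2.ind with | _ a b => exact ⟨a, b, rfl⟩

private lemma stmt9_partner {N : ℕ} {M : Set (Sym2 (Fin N))}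
    (hM₂ : ∀ e ∈ M, ∀ f ∈ M, e ≠ f → ∀ x : Fin N, x ∈ e → x ∉ f) (v a b : Fin N)
    (ha : s(v, a) ∈ M) (hb : s(v, b) ∈ M) : a = b := by
  by_contra hab
  have hne : s(v, a) ≠ s(v, b) := by
    intro h
    rcases Sym2.eq_iff.mp h with ⟨-, h2⟩ | ⟨h1, h2⟩
    · exact hab h2
    · exact hab (h2.trans h1)
  exact hM₂ _ ha _ hb hne v (Sym2.mem_mk_left v a) (Sym2.mem_mk_left v b)

private lemma stmt9_fresh {N : ℕ} {M : Set (Sym2 (Fin N))}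
    (hM₂ : ∀ e ∈ M, ∀ f ∈ M, e ≠ f → ∀ x : Fin N, x ∈ e → x ∉ f)
    (S : Finset (Fin N)) (u₁ u₂ : Fin N) (hS : S.card + 2 < N) :
    ∃ x : Fin N, x ∉ S ∧ s(u₁, x) ∉ M ∧ s(x, u₂) ∉ M := by
  classical
  set B := (S ∪ Finset.univ.filter (fun x => s(u₁, x) ∈ M))
      ∪ Finset.univ.filter (fun x => s(u₂, x) ∈ M) with hBdef
  have h1 : (Finset.univ.filter (fun x : Fin N => s(u₁, x) ∈ M)).card ≤ 1 := by
    refine Finset.card_le_one.mpr (fun a ha b hb => ?_)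
    simp only [Finset.mem_filter] at ha hb
    exact stmt9_partner hM₂ u₁ a b ha.2 hb.2
  have h2 : (Finset.univ.filter (fun x : Fin N => s(u₂, x) ∈ M)).card ≤ 1 := by
    refine Finset.card_le_one.mpr (fun a ha b hb => ?_)
    simp only [Finset.mem_filter] at ha hb
    exact stmt9_partner hM₂ u₂ a b ha.2 hb.2
  have hBcard : B.card < N := by
    rw [hBdef]
    have := Finset.card_union_le (S ∪ Finset.univ.filter (fun x : Fin N => s(u₁, x) ∈ M))
      (Finset.univ.filter (fun x : Fin N => s(u₂, x) ∈ M))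
    have := Finset.card_union_le S (Finset.univ.filter (fun x : Fin N => s(u₁, x) ∈ M))
    omega
  have hex : ∃ x : Fin N, x ∉ B := by
    by_contra h
    push_neg at h
    have hsub : (Finset.univ : Finset (Fin N)) ⊆ B := fun x _ => h x
    have := Finset.card_le_card hsub
    simp only [Finset.card_univ, Fintype.card_fin] at this
    omega
  obtain ⟨x, hx⟩ := hex
  simp only [hBdef, Finset.mem_union, Finset.mem_filter, Finset.mem_univ, true_and,
    not_or] at hx
  refine ⟨x, hx.1.1, hx.1.2, ?_⟩
  rw [Sym2.eq_swap]
  exact hx.2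

private lemma stmt9_key (n N : ℕ) (hn : 2 ≤ n) (hN : 4 * n + 4 ≤ N)
    (M : Set (Sym2 (Fin N)))
    (hM₂ : ∀ e ∈ M, ∀ f ∈ M, e ≠ f → ∀ x : Fin N, x ∈ e → x ∉ f)
    (A : Finset (Fin N)) (hA : A.card ≤ 2 * n + 2)
    (E : Finset (Sym2 (Fin N))) :
    ↑E ⊆ ((⊤ : SimpleGraph (Fin N)).deleteEdges M).edgeSet →
    E.card ≤ n →
    (∀ e ∈ E, ∀ x : Fin N, x ∈ e → x ∈ A) →
    ∀ v w : Fin N, v ∈ A → w ∈ A →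
    ∃ (p : ((⊤ : SimpleGraph (Fin N)).deleteEdges M).Walk v w) (F : Finset (Fin N)),
      p.IsTrail ∧ (∀ e ∈ E, e ∈ p.edges) ∧
      (∀ f ∈ p.edges, f ∈ E ∨ ∃ x ∈ F, x ∈ f) ∧
      (∀ z ∈ p.support, z ∈ A ∪ F) ∧
      Disjoint F A ∧ F.card ≤ E.card + 1 := by
  induction E using Finset.induction_on with
  | empty =>
    intro _ _ _ v w hv hw
    by_cases hvw : v = w
    · subst hvw
      refine ⟨.nil, ∅, ?_, ?_, ?_, ?_, ?_, ?_⟩ <;> simp [hv]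
    · obtain ⟨x, hxA, hvx, hxw⟩ := stmt9_fresh hM₂ A v w (by omega)
      have hadj1 : ((⊤ : SimpleGraph (Fin N)).deleteEdges M).Adj v x := by
        rw [SimpleGraph.deleteEdges_adj, SimpleGraph.top_adj]
        exact ⟨fun h => hxA (by rw [← h]; exact hv), hvx⟩
      have hadj2 : ((⊤ : SimpleGraph (Fin N)).deleteEdges M).Adj x w := by
        rw [SimpleGraph.deleteEdges_adj, SimpleGraph.top_adj]
        exact ⟨fun h => hxA (by rw [h]; exact hw), hxw⟩
      have hne : s(v, x) ≠ s(x, w) := by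
        intro h
        rcases Sym2.eq_iff.mp h with ⟨h1, h2⟩ | ⟨h1, h2⟩
        · exact hvw (h1.trans h2)
        · exact hvw h1
      refine ⟨.cons hadj1 (.cons hadj2 .nil), {x}, ?_, ?_, ?_, ?_, ?_, ?_⟩
      · simp [SimpleGraph.Walk.isTrail_def, hne]
      · simp
      · intro f hf
        simp only [SimpleGraph.Walk.edges_cons, SimpleGraph.Walk.edges_nil,
          List.mem_cons, List.not_mem_nil, or_false] at hf
        right
        refine ⟨x, Finset.mem_singleton_self x, ?_⟩
        rcases hf with rfl | rfl
        · exact Sym2.mem_mk_right v x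
        · exact Sym2.mem_mk_left x w
      · intro z hz
        simp only [SimpleGraph.Walk.support_cons, SimpleGraph.Walk.support_nil,
          List.mem_cons, List.not_mem_nil, or_false] at hz
        rcases hz with rfl | rfl | rfl
        · exact Finset.mem_union_left _ hv
        · exact Finset.mem_union_right _ (Finset.mem_singleton_self _)
        · exact Finset.mem_union_left _ hw
      · exact Finset.disjoint_singleton_left.mpr hxA
      · simp
  | @insert e E' he IH =>
    intro hEsub hEcard hEA v w hv hw
    obtain ⟨a, b, rfl⟩ := stmt9_sym2_exists e
    have habE : s(a, b) ∈ ((⊤ : SimpleGraph (Fin N)).deleteEdges M).edgeSet :=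
      hEsub (Finset.mem_coe.mpr (Finset.mem_insert_self _ _))
    have hab : ((⊤ : SimpleGraph (Fin N)).deleteEdges M).Adj a b := by
      rwa [SimpleGraph.mem_edgeSet] at habE
    have haA : a ∈ A := hEA _ (Finset.mem_insert_self _ _) a (Sym2.mem_mk_left a b)
    have hbA : b ∈ A := hEA _ (Finset.mem_insert_self _ _) b (Sym2.mem_mk_right a b)
    have hcardins : (insert s(a, b) E').card = E'.card + 1 :=
      Finset.card_insert_of_notMem he
    obtain ⟨p, F, hT, hcov, hedges, hsupp, hdisj, hFcard⟩ :=
      IH (fun f hf => hEsub (Finset.mem_coe.mpr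
          (Finset.mem_insert_of_mem (Finset.mem_coe.mp hf))))
        (by omega)
        (fun f hf x hx => hEA f (Finset.mem_insert_of_mem hf) x hx)
        b w hbA hw
    have heE' : s(a, b) ∉ p.edges := by
      intro hmem
      rcases hedges _ hmem with h | ⟨y, hyF, hy⟩
      · exact he h
      · rcases Sym2.mem_iff.mp hy with rfl | rfl
        · exact (Finset.disjoint_left.mp hdisj hyF) haA
        · exact (Finset.disjoint_left.mp hdisj hyF) hbA
    by_cases hva : v = a
    · subst hva
      refine ⟨.cons hab p, F, ?_, ?_, ?_, ?_, hdisj, by omega⟩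
      · exact (SimpleGraph.Walk.isTrail_cons hab p).mpr ⟨hT, heE'⟩
      · intro f hf
        rcases Finset.mem_insert.mp hf with rfl | hf'
        · exact List.mem_cons_self
        · exact List.mem_cons_of_mem _ (hcov f hf')
      · intro f hf
        rcases List.mem_cons.mp hf with rfl | hf'
        · exact Or.inl (Finset.mem_insert_self _ _)
        · rcases hedges f hf' with h | h
          · exact Or.inl (Finset.mem_insert_of_mem h)
          · exact Or.inr h
      · intro z hz
        rcases List.mem_cons.mp hz with rfl | hz'
        · exact Finset.mem_union_left _ haA
        · exact hsupp z hz'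
    · have hcardbound : (A ∪ F).card + 2 < N := by
        have := Finset.card_union_le A F
        omega
      obtain ⟨x, hxAF, hvx, hxa⟩ := stmt9_fresh hM₂ (A ∪ F) v a hcardbound
      have hxA : x ∉ A := fun h => hxAF (Finset.mem_union_left _ h)
      have hxF : x ∉ F := fun h => hxAF (Finset.mem_union_right _ h)
      have hadj1 : ((⊤ : SimpleGraph (Fin N)).deleteEdges M).Adj v x := by
        rw [SimpleGraph.deleteEdges_adj, SimpleGraph.top_adj]
        exact ⟨fun h => hxA (by rw [← h]; exact hv), hvx⟩
      have hadj2 : ((⊤ : SimpleGraph (Fin N)).deleteEdges M).Adj x a := by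
        rw [SimpleGraph.deleteEdges_adj, SimpleGraph.top_adj]
        exact ⟨fun h => hxA (by rw [h]; exact haA), hxa⟩
      have hxedge : ∀ f ∈ p.edges, x ∉ f := by
        intro f hf hxf
        obtain ⟨c, d, rfl⟩ := stmt9_sym2_exists f
        have hxsupp : x ∈ p.support := by
          rcases Sym2.mem_iff.mp hxf with rfl | rfl
          · exact p.fst_mem_support_of_mem_edges hf
          · exact p.snd_mem_support_of_mem_edges hf
        exact hxAF (hsupp x hxsupp)
      have hnew1 : s(v, x) ∉ p.edges := fun h => hxedge _ h (Sym2.mem_mk_right v x)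
      have hnew2 : s(x, a) ∉ p.edges := fun h => hxedge _ h (Sym2.mem_mk_left x a)
      have d12 : s(v, x) ≠ s(x, a) := by
        intro h
        rcases Sym2.eq_iff.mp h with ⟨h1, h2⟩ | ⟨h1, h2⟩
        · exact hxA (by rw [← h1]; exact hv)
        · exact hva h1
      have d13 : s(v, x) ≠ s(a, b) := by
        intro h
        rcases Sym2.eq_iff.mp h with ⟨h1, h2⟩ | ⟨h1, h2⟩
        · exact hxA (by rw [h2]; exact hbA)
        · exact hxA (by rw [h2]; exact haA)
      have d23 : s(x, a) ≠ s(a, b) := by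
        intro h
        rcases Sym2.eq_iff.mp h with ⟨h1, h2⟩ | ⟨h1, h2⟩
        · exact hxA (by rw [h1]; exact haA)
        · exact hxA (by rw [h1]; exact hbA)
      refine ⟨.cons hadj1 (.cons hadj2 (.cons hab p)), insert x F, ?_, ?_, ?_, ?_, ?_, ?_⟩
      · rw [SimpleGraph.Walk.isTrail_def]
        simp only [SimpleGraph.Walk.edges_cons, List.nodup_cons, List.mem_cons, not_or]
        exact ⟨⟨d12, d13, hnew1⟩, ⟨d23, hnew2⟩, heE', hT.edges_nodup⟩
      · intro f hf
        simp only [SimpleGraph.Walk.edges_cons, List.mem_cons]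
        rcases Finset.mem_insert.mp hf with rfl | hf'
        · tauto
        · exact Or.inr (Or.inr (Or.inr (hcov f hf')))
      · intro f hf
        simp only [SimpleGraph.Walk.edges_cons, List.mem_cons] at hf
        rcases hf with rfl | rfl | rfl | hf'
        · exact Or.inr ⟨x, Finset.mem_insert_self _ _, Sym2.mem_mk_right v x⟩
        · exact Or.inr ⟨x, Finset.mem_insert_self _ _, Sym2.mem_mk_left x a⟩
        · exact Or.inl (Finset.mem_insert_self _ _)
        · rcases hedges f hf' with h | ⟨y, hy, hyf⟩
          · exact Or.inl (Finset.mem_insert_of_mem h)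
          · exact Or.inr ⟨y, Finset.mem_insert_of_mem hy, hyf⟩
      · intro z hz
        simp only [SimpleGraph.Walk.support_cons, List.mem_cons] at hz
        rcases hz with rfl | rfl | rfl | hz'
        · exact Finset.mem_union_left _ hv
        · exact Finset.mem_union_right _ (Finset.mem_insert_self _ _)
        · exact Finset.mem_union_left _ haA
        · rcases Finset.mem_union.mp (hsupp z hz') with h | h
          · exact Finset.mem_union_left _ h
          · exact Finset.mem_union_right _ (Finset.mem_insert_of_mem h)
      · exact Finset.disjoint_insert_left.mpr ⟨hxA, hdisj⟩
      · have := Finset.card_insert_le x F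
        omega

theorem stmt_9 (n N : ℕ) (hn : 2 ≤ n) (hN : 4 * n + 4 ≤ N)
    (M : Set (Sym2 (Fin N)))
    (hM₁ : M ⊆ (⊤ : SimpleGraph (Fin N)).edgeSet)
    (hM₂ : ∀ e ∈ M, ∀ f ∈ M, e ≠ f → ∀ x : Fin N, x ∈ e → x ∉ f)
    (E : Finset (Sym2 (Fin N)))
    (hE : ↑E ⊆ ((⊤ : SimpleGraph (Fin N)).deleteEdges M).edgeSet)
    (hEcard : E.card ≤ n) (v w : Fin N) (hvw : v ≠ w) :
    ∃ p : ((⊤ : SimpleGraph (Fin N)).deleteEdges M).Walk v w,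
      p.IsTrail ∧ ∀ e ∈ E, e ∈ p.edges := by
  classical
  set A : Finset (Fin N) :=
    insert v (insert w (E.biUnion fun e => {e.out.1, e.out.2})) with hAdef
  have hAcard : A.card ≤ 2 * n + 2 := by
    have h1 : (E.biUnion fun e => ({e.out.1, e.out.2} : Finset (Fin N))).card ≤ 2 * E.card := by
      refine le_trans (Finset.card_biUnion_le) ?_
      calc ∑ e ∈ E, ({e.out.1, e.out.2} : Finset (Fin N)).card
          ≤ ∑ _e ∈ E, 2 := by
            refine Finset.sum_le_sum (fun e _ => ?_)
            exact le_trans (Finset.card_insert_le _ _) (by simp)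
        _ = 2 * E.card := by rw [Finset.sum_const, smul_eq_mul, mul_comm]
    have h2 := Finset.card_insert_le w (E.biUnion fun e => ({e.out.1, e.out.2} : Finset (Fin N)))
    have h3 := Finset.card_insert_le v (insert w (E.biUnion fun e => ({e.out.1, e.out.2} : Finset (Fin N))))
    rw [hAdef]
    omega
  have hmemA : ∀ e ∈ E, ∀ x : Fin N, x ∈ e → x ∈ A := by
    intro e heE x hx
    have hout : e = s(e.out.1, e.out.2) := by
      conv_lhs => rw [← e.out_eq]
    rw [hout] at hx
    rw [hAdef]
    refine Finset.mem_insert_of_mem (Finset.mem_insert_of_mem ?_)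
    refine Finset.mem_biUnion.mpr ⟨e, heE, ?_⟩
    rcases Sym2.mem_iff.mp hx with rfl | rfl
    · exact Finset.mem_insert_self _ _
    · exact Finset.mem_insert_of_mem (Finset.mem_singleton_self _)
  obtain ⟨p, F, hT, hcov, -, -, -, -⟩ :=
    stmt9_key n N hn hN M hM₂ A hAcard E hE hEcard hmemA v w
      (Finset.mem_insert_self _ _)
      (Finset.mem_insert_of_mem (Finset.mem_insert_self _ _))
  exact ⟨p, hT, hcov⟩
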